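/- Let v₀, …, v_d be affinely independent points of ℝ^d with convex hull S, and let f : ℝ^d → ℝ be continuously differentiable on an open set containing S with ‖Df(x)‖ ≤ M for all x ∈ S (operator norm of the derivative, equivalently the Euclidean norm of the gradient). Let f_l be the linear interpolant of f on S, and suppose S is contained in a closed ball of radius ρ. Then |f(s) − f_l(s)| ≤ Mρ for all s ∈ S. -/

import Mathlib

/-- Case (iii) of the paper's Proposition 1: if `f` is `C¹` on an open set containing the
simplex `S = conv{v₀, …, v_d}` with `‖Df(x)‖ ≤ M` on `S`, and `S` is contained in a
closed ball of radius `ρ`, then the linear interpolation error is at most `M ρ` on `S`. -/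
theorem interpolation_error_le_deriv_bound_mul_radius
    (d : ℕ) (v : Fin (d + 1) → EuclideanSpace ℝ (Fin d))
    (hv : AffineIndependent ℝ v)
    (f : EuclideanSpace ℝ (Fin d) → ℝ)
    (U : Set (EuclideanSpace ℝ (Fin d))) (hU : IsOpen U)
    (hSU : convexHull ℝ (Set.range v) ⊆ U)
    (hf : ContDiffOn ℝ 1 f U)
    (M : ℝ)
    (hM : ∀ x ∈ convexHull ℝ (Set.range v), ‖fderiv ℝ f x‖ ≤ M)
    (fl : EuclideanSpace ℝ (Fin d) →ᵃ[ℝ] ℝ)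
    (hfl : ∀ i, fl (v i) = f (v i))
    (c : EuclideanSpace ℝ (Fin d)) (ρ : ℝ)
    (hball : convexHull ℝ (Set.range v) ⊆ Metric.closedBall c ρ) :
    ∀ s ∈ convexHull ℝ (Set.range v), |f s - fl s| ≤ M * ρ := by
  intro s hs
  have hM0 : 0 ≤ M := le_trans (norm_nonneg _) (hM s hs)
  have hρ0 : 0 ≤ ρ := le_trans dist_nonneg (hball hs)
  have hdiff : ∀ x ∈ convexHull ℝ (Set.range v), DifferentiableAt ℝ f x := fun x hx =>
    ((hf.differentiableOn one_ne_zero) x (hSU hx)).differentiableAt (hU.mem_nhds (hSU hx))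
  have hLip : ∀ x ∈ convexHull ℝ (Set.range v), ‖f s - f x‖ ≤ M * ‖s - x‖ := fun x hx =>
    (convex_convexHull ℝ _).norm_image_sub_le_of_norm_fderiv_le hdiff hM hx hs
  have hs' := hs
  rw [convexHull_range_eq_exists_affineCombination] at hs'
  obtain ⟨t, w, hw0, hw1, hts⟩ := hs'
  have hslin : s = ∑ i ∈ t, w i • v i := by
    rw [← hts, Finset.affineCombination_eq_linear_combination t v w hw1]
  have hfls : fl s = ∑ i ∈ t, w i * f (v i) := by
    rw [← hts, Finset.map_affineCombination t v w hw1 fl,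
      Finset.affineCombination_eq_linear_combination t (fl ∘ v) w hw1]
    simp [hfl]
  have hdiffsum : f s - fl s = ∑ i ∈ t, w i * (f s - f (v i)) := by
    simp only [mul_sub]
    rw [Finset.sum_sub_distrib, ← Finset.sum_mul, hw1, one_mul, hfls]
  -- key geometric bound
  have hinner : ∑ i ∈ t, w i * (inner ℝ (v i - s) (s - c) : ℝ) = 0 := by
    have : ∑ i ∈ t, w i * (inner ℝ (v i - s) (s - c) : ℝ)
        = (inner ℝ (∑ i ∈ t, w i • (v i - s)) (s - c) : ℝ) := by
      rw [sum_inner]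
      exact Finset.sum_congr rfl fun i _ => (real_inner_smul_left _ _ _).symm
    rw [this]
    have : ∑ i ∈ t, w i • (v i - s) = 0 := by
      simp only [smul_sub, Finset.sum_sub_distrib, ← Finset.sum_smul, hw1, one_smul, ← hslin,
        sub_self]
    rw [this, inner_zero_left]
  have hident : ∑ i ∈ t, w i * ‖v i - s‖ ^ 2 ≤ ρ ^ 2 := by
    have hexp : ∀ i ∈ t, w i * ‖v i - c‖ ^ 2 =
        w i * ‖v i - s‖ ^ 2 + 2 * (w i * (inner ℝ (v i - s) (s - c) : ℝ)) + w i * ‖s - c‖ ^ 2 := by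
      intro i _
      have : v i - c = (v i - s) + (s - c) := by abel
      rw [this, norm_add_sq_real]
      ring
    have hsum : ∑ i ∈ t, w i * ‖v i - c‖ ^ 2
        = ∑ i ∈ t, w i * ‖v i - s‖ ^ 2 + ‖s - c‖ ^ 2 := by
      rw [Finset.sum_congr rfl hexp, Finset.sum_add_distrib, Finset.sum_add_distrib,
        ← Finset.mul_sum, hinner, ← Finset.sum_mul, hw1]
      ring
    have hbd : ∑ i ∈ t, w i * ‖v i - c‖ ^ 2 ≤ ρ ^ 2 := by
      calc ∑ i ∈ t, w i * ‖v i - c‖ ^ 2 ≤ ∑ i ∈ t, w i * ρ ^ 2 := by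
            refine Finset.sum_le_sum fun i hi => ?_
            have hvi : v i ∈ Metric.closedBall c ρ :=
              hball (subset_convexHull ℝ _ (Set.mem_range_self i))
            have : ‖v i - c‖ ≤ ρ := by
              rw [← dist_eq_norm]; exact hvi
            exact mul_le_mul_of_nonneg_left
              (pow_le_pow_left₀ (norm_nonneg _) this 2) (hw0 i hi)
        _ = ρ ^ 2 := by rw [← Finset.sum_mul, hw1, one_mul]
    nlinarith [sq_nonneg ‖s - c‖]
  have hw0' : ∀ i ∈ t, 0 ≤ w i * ‖v i - s‖ := fun i hi =>
    mul_nonneg (hw0 i hi) (norm_nonneg _)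
  have hCS : (∑ i ∈ t, w i * ‖v i - s‖) ^ 2 ≤ ρ ^ 2 := by
    have := Finset.sum_mul_sq_le_sq_mul_sq t (fun i => Real.sqrt (w i))
      (fun i => Real.sqrt (w i) * ‖v i - s‖)
    have h1 : ∀ i ∈ t, Real.sqrt (w i) * (Real.sqrt (w i) * ‖v i - s‖) = w i * ‖v i - s‖ := by
      intro i hi
      rw [← mul_assoc, Real.mul_self_sqrt (hw0 i hi)]
    have h2 : ∀ i ∈ t, Real.sqrt (w i) ^ 2 = w i := fun i hi => Real.sq_sqrt (hw0 i hi)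
    have h3 : ∀ i ∈ t, (Real.sqrt (w i) * ‖v i - s‖) ^ 2 = w i * ‖v i - s‖ ^ 2 := by
      intro i hi
      rw [mul_pow, Real.sq_sqrt (hw0 i hi)]
    rw [Finset.sum_congr rfl h1, Finset.sum_congr rfl h2, Finset.sum_congr rfl h3, hw1,
      one_mul] at this
    exact this.trans hident
  have hkey : ∑ i ∈ t, w i * ‖v i - s‖ ≤ ρ := by
    nlinarith [Finset.sum_nonneg hw0', hCS]
  calc |f s - fl s| = |∑ i ∈ t, w i * (f s - f (v i))| := by rw [hdiffsum]
    _ ≤ ∑ i ∈ t, |w i * (f s - f (v i))| := Finset.abs_sum_le_sum_abs _ _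
    _ ≤ ∑ i ∈ t, w i * (M * ‖v i - s‖) := by
        refine Finset.sum_le_sum fun i hi => ?_
        rw [abs_mul, abs_of_nonneg (hw0 i hi)]
        refine mul_le_mul_of_nonneg_left ?_ (hw0 i hi)
        have := hLip (v i) (subset_convexHull ℝ _ (Set.mem_range_self i))
        simpa [Real.norm_eq_abs, norm_sub_rev] using this
    _ = M * ∑ i ∈ t, w i * ‖v i - s‖ := by
        rw [Finset.mul_sum]; exact Finset.sum_congr rfl fun i _ => by ring
    _ ≤ M * ρ := mul_le_mul_of_nonneg_left hkey hM0
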